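/- Let μ be a Borel probability measure on E, let z ∈ E, and let w ∈ L¹(E,μ) be an integration-by-parts weight for (μ,z). Assume: (i) the pushforward measure μ∘g⁻¹ is absolutely continuous with respect to Lebesgue measure on ℝ; (ii) for μ-almost every x ∈ E the minimum of x over [0,1] is attained at a unique point, and τ : E → [0,1] is a measurable map with x(τ(x)) = g(x) for μ-a.e. x; (iii) for every φ ∈ C¹_b(E), every ε > 0 and every r ∈ ℝ with r + ε < 0: (1/(2ε)) ∫_{{x : r−ε ≤ g(x) ≤ r+ε}} z(τ(x)) φ(x) μ(dx) = − ∫_E θ_{r,ε}(g(x)) ( Dφ(x)(z) − w(x) φ(x) ) μ(dx). Let φ ∈ C¹_b(E) and assume in addition that the pushforward under x ↦ (g(x), τ(x)) of the measure φ·μ has a jointly measurable density q : ℝ × [0,1] → ℝ with respect to Lebesgue measure such that r ↦ ∫₀¹ z(s) q(r,s) ds is continuous on (−∞,0). Then for every r < 0: ∫₀¹ z(s) q(r,s) ds = − ∫_{{x : g(x) ≥ r}} ( Dφ(x)(z) − w(x) φ(x) ) μ(dx). -/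

import Mathlib

open MeasureTheory Filter Topology

noncomputable section

/-- `E = C([0,1])` with the supremum norm. -/
abbrev E : Type := C(Set.Icc (0:ℝ) 1, ℝ)

/-- `φ ∈ C¹_b(X)`: `φ` is continuously Fréchet differentiable, bounded, with bounded
derivative. -/
def IsC1b {X : Type*} [NormedAddCommGroup X] [NormedSpace ℝ X] (φ : X → ℝ) : Prop :=
  ContDiff ℝ 1 φ ∧ (∃ C, ∀ x, |φ x| ≤ C) ∧ (∃ C, ∀ x, ‖fderiv ℝ φ x‖ ≤ C)

instance : MeasurableSpace E := borel E
instance : BorelSpace E := ⟨rfl⟩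

/-- `g(x) = min_{t ∈ [0,1]} x(t)`. -/
def g : E → ℝ := fun x => ⨅ t : Set.Icc (0:ℝ) 1, x t

/-- The piecewise linear cut-off `θ_{r,ε}`. -/
def theta (r ε ξ : ℝ) : ℝ :=
  if ξ < r - ε then 0 else if ξ ≤ r + ε then (ξ - r + ε) / (2 * ε) else 1

lemma g_continuous : Continuous g := by
  have key : ∀ x y : E, g x ≤ g y + dist x y := by
    intro x y
    have hb : BddBelow (Set.range fun t : Set.Icc (0:ℝ) 1 => x t) :=
      (isCompact_range x.continuous).bddBelow
    have h1 : ∀ t : Set.Icc (0:ℝ) 1, g x - dist x y ≤ y t := by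
      intro t
      have h2 : g x ≤ x t := ciInf_le hb t
      have h3 : dist (x t) (y t) ≤ dist x y := ContinuousMap.dist_apply_le_dist t
      have : x t - y t ≤ dist x y := (le_abs_self _).trans (by rw [← Real.dist_eq]; exact h3)
      linarith
    have := le_ciInf h1
    simpa [g, sub_le_iff_le_add] using this
  have lip : LipschitzWith 1 g := by
    apply LipschitzWith.of_dist_le_mul
    intro x y
    rw [Real.dist_eq]
    push_cast
    rw [one_mul]
    have k1 := key x y
    have k2 := key y x
    rw [dist_comm y x] at k2
    exact abs_sub_le_iff.mpr ⟨by linarith, by linarith⟩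
  exact lip.continuous

lemma theta_measurable (r ε : ℝ) : Measurable (theta r ε) := by
  unfold theta
  exact Measurable.ite (measurableSet_lt measurable_id measurable_const) measurable_const
    (Measurable.ite (measurableSet_le measurable_id measurable_const)
      (((measurable_id.sub measurable_const).add measurable_const).div_const _)
      measurable_const)

lemma theta_nonneg {r ε : ℝ} (hε : 0 < ε) (ξ : ℝ) : 0 ≤ theta r ε ξ := by
  unfold theta
  split_ifs with h1 h2
  · norm_num
  · have hle : r - ε ≤ ξ := by push_neg at h1; exact h1
    apply div_nonneg (by linarith) (by positivity)
  · norm_num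

lemma theta_le_one {r ε : ℝ} (hε : 0 < ε) (ξ : ℝ) : theta r ε ξ ≤ 1 := by
  unfold theta
  split_ifs with h1 h2
  · norm_num
  · rw [div_le_one (by positivity)]
    push_neg at h1
    linarith
  · norm_num

lemma theta_eq_zero {r ε ξ : ℝ} (h : ξ < r - ε) : theta r ε ξ = 0 := by
  simp [theta, h]

lemma theta_eq_one {r ε ξ : ℝ} (hε : 0 < ε) (h : r + ε < ξ) : theta r ε ξ = 1 := by
  have h1 : ¬ ξ < r - ε := by push_neg; linarith
  have h2 : ¬ ξ ≤ r + ε := by push_neg; linarith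
  simp [theta, h1, h2]

lemma ofReal_abs_le (a : ℝ) :
    ENNReal.ofReal |a| ≤ ENNReal.ofReal a + ENNReal.ofReal (-a) := by
  rcases le_total 0 a with h | h
  · rw [abs_of_nonneg h]; exact le_self_add
  · rw [abs_of_nonpos h]; exact le_add_self

set_option maxHeartbeats 2000000 in
/-- If in addition the pushforward under `x ↦ (g(x), τ(x))` of the measure
`φ·μ` admits a jointly measurable density `q` with respect to Lebesgue measure on
`ℝ × [0,1]`, with `r ↦ ∫₀¹ z(s) q(r,s) ds` continuous on `(−∞,0)`, then for every `r < 0`,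
`∫₀¹ z(s) q(r,s) ds = −∫_{g ≥ r} (Dφ·z − wφ) dμ`. -/
theorem surface_integration_by_parts_with_joint_density
    (μ : Measure E) [IsProbabilityMeasure μ] (z : E) (w : E → ℝ)
    (hw : Integrable w μ)
    (hweight : ∀ φ : E → ℝ, IsC1b φ → ∫ x, fderiv ℝ φ x z ∂μ = ∫ x, φ x * w x ∂μ)
    (habs : μ.map g ≪ (volume : Measure ℝ))
    (huniq : ∀ᵐ x ∂μ, ∃! t : Set.Icc (0:ℝ) 1, x t = g x)
    (τ : E → Set.Icc (0:ℝ) 1) (hτmeas : Measurable τ)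
    (hτ : ∀ᵐ x ∂μ, x (τ x) = g x)
    (hkey : ∀ φ : E → ℝ, IsC1b φ → ∀ ε : ℝ, 0 < ε → ∀ r : ℝ, r + ε < 0 →
      (1 / (2 * ε)) * ∫ x in {x | r - ε ≤ g x ∧ g x ≤ r + ε}, z (τ x) * φ x ∂μ
        = - ∫ x, theta r ε (g x) * (fderiv ℝ φ x z - w x * φ x) ∂μ)
    (φ : E → ℝ) (hφ : IsC1b φ)
    (q : ℝ × Set.Icc (0:ℝ) 1 → ℝ) (hqmeas : Measurable q)
    (hq : ∀ B : Set (ℝ × Set.Icc (0:ℝ) 1), MeasurableSet B →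
      ∫ x, B.indicator (fun _ => (1:ℝ)) (g x, τ x) * φ x ∂μ
        = ∫ p in B, q p ∂((volume : Measure ℝ).prod (volume : Measure (Set.Icc (0:ℝ) 1))))
    (hqc : ContinuousOn (fun r : ℝ => ∫ s : Set.Icc (0:ℝ) 1, z s * q (r, s)) (Set.Iio 0)) :
    ∀ r : ℝ, r < 0 →
      ∫ s : Set.Icc (0:ℝ) 1, z s * q (r, s)
        = - ∫ x in {x | r ≤ g x}, (fderiv ℝ φ x z - w x * φ x) ∂μ := by
  classical
  set m2 : Measure (ℝ × Set.Icc (0:ℝ) 1) :=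
    (volume : Measure ℝ).prod (volume : Measure (Set.Icc (0:ℝ) 1)) with hm2
  set F : ℝ → ℝ := fun t => ∫ s : Set.Icc (0:ℝ) 1, z s * q (t, s) with hF
  set hfun : E → ℝ := fun x => fderiv ℝ φ x z - w x * φ x with hhfun
  intro r hr
  -- basic facts
  have hgm : Measurable g := g_continuous.measurable
  have hφc : Continuous φ := hφ.1.continuous
  obtain ⟨Cφ, hCφ⟩ := hφ.2.1
  have hφint : Integrable φ μ :=
    (integrable_const Cφ).mono' hφc.aestronglyMeasurable
      (ae_of_all μ fun x => by simpa [Real.norm_eq_abs] using hCφ x)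
  have habsφint : Integrable (fun x => |φ x|) μ := hφint.abs
  set Cφ' : ℝ := ∫ x, |φ x| ∂μ with hCφ'
  have hzmeas : Measurable (fun s : Set.Icc (0:ℝ) 1 => z s) := z.continuous.measurable
  have hzb : ∀ s : Set.Icc (0:ℝ) 1, ‖z s‖ ≤ ‖z‖ := fun s => z.norm_coe_le_norm s
  -- bound on set integrals of q
  have habsB : ∀ B : Set (ℝ × Set.Icc (0:ℝ) 1), MeasurableSet B →
      |∫ p in B, q p ∂m2| ≤ Cφ' := by
    intro B hB
    rw [← hq B hB]
    have h1 : ‖∫ x, B.indicator (fun _ => (1:ℝ)) (g x, τ x) * φ x ∂μ‖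
        ≤ ∫ x, ‖B.indicator (fun _ => (1:ℝ)) (g x, τ x) * φ x‖ ∂μ :=
      norm_integral_le_integral_norm _
    have h2 : ∫ x, ‖B.indicator (fun _ => (1:ℝ)) (g x, τ x) * φ x‖ ∂μ ≤ ∫ x, |φ x| ∂μ := by
      apply integral_mono_of_nonneg (ae_of_all _ fun x => norm_nonneg _) habsφint
      apply ae_of_all
      intro x
      simp only [Real.norm_eq_abs, abs_mul]
      by_cases hx : (g x, τ x) ∈ B
      · simp [Set.indicator_of_mem hx]
      · simp [Set.indicator_of_notMem hx]
    calc |∫ x, B.indicator (fun _ => (1:ℝ)) (g x, τ x) * φ x ∂μ|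
        = ‖∫ x, B.indicator (fun _ => (1:ℝ)) (g x, τ x) * φ x ∂μ‖ := (Real.norm_eq_abs _).symm
      _ ≤ ∫ x, ‖B.indicator (fun _ => (1:ℝ)) (g x, τ x) * φ x‖ ∂μ := h1
      _ ≤ Cφ' := h2
  -- the key finiteness lemma
  have key_fin : ∀ q' : ℝ × Set.Icc (0:ℝ) 1 → ℝ, Measurable q' →
      (∀ B : Set (ℝ × Set.Icc (0:ℝ) 1), MeasurableSet B → |∫ p in B, q' p ∂m2| ≤ Cφ') →
      ∫⁻ p, ENNReal.ofReal (q' p) ∂m2 ≤ ENNReal.ofReal Cφ' := by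
    intro q' hq'm hq'b
    set Bn : ℕ → Set (ℝ × Set.Icc (0:ℝ) 1) :=
      fun n => q' ⁻¹' (Set.Icc 0 (n:ℝ)) ∩
        (Set.Icc (-(n:ℝ)) (n:ℝ) ×ˢ (Set.univ : Set (Set.Icc (0:ℝ) 1))) with hBn
    have hBnm : ∀ n, MeasurableSet (Bn n) := fun n =>
      (hq'm measurableSet_Icc).inter (measurableSet_Icc.prod MeasurableSet.univ)
    have hBfin : ∀ n, m2 (Bn n) < ⊤ := by
      intro n
      refine (measure_mono Set.inter_subset_right).trans_lt ?_
      rw [hm2, Measure.prod_prod]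
      exact ENNReal.mul_lt_top (by simp [Real.volume_Icc]) (measure_lt_top _ _)
    have hmono : Monotone Bn := by
      intro n m hnm
      apply Set.inter_subset_inter
      · exact Set.preimage_mono (Set.Icc_subset_Icc le_rfl (by exact_mod_cast hnm))
      · exact Set.prod_mono (Set.Icc_subset_Icc (by push_cast; linarith [(by exact_mod_cast hnm : (n:ℝ) ≤ m)]) (by exact_mod_cast hnm)) le_rfl
    have hBint : ∀ n, ∫⁻ p in Bn n, ENNReal.ofReal (q' p) ∂m2 ≤ ENNReal.ofReal Cφ' := by
      intro n
      haveI : IsFiniteMeasure (m2.restrict (Bn n)) := by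
        constructor
        rw [Measure.restrict_apply_univ]
        exact hBfin n
      have hint : Integrable q' (m2.restrict (Bn n)) := by
        apply (integrable_const (n:ℝ)).mono' hq'm.aestronglyMeasurable.restrict
        refine (ae_restrict_iff' (hBnm n)).2 (ae_of_all _ fun p hp => ?_)
        have h1 : 0 ≤ q' p := hp.1.1
        have h2 : q' p ≤ n := hp.1.2
        simpa [Real.norm_eq_abs, abs_of_nonneg h1] using h2
      have hpos : 0 ≤ᵐ[m2.restrict (Bn n)] q' :=
        (ae_restrict_iff' (hBnm n)).2 (ae_of_all _ fun p hp => hp.1.1)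
      rw [← ofReal_integral_eq_lintegral_ofReal hint hpos]
      exact ENNReal.ofReal_le_ofReal ((le_abs_self _).trans (hq'b _ (hBnm n)))
    have hcover : ∀ p, ENNReal.ofReal (q' p)
        = ⨆ n, (Bn n).indicator (fun p => ENNReal.ofReal (q' p)) p := by
      intro p
      rcases le_or_gt 0 (q' p) with hp | hp
      · apply le_antisymm
        · set n : ℕ := ⌈q' p⌉₊ ⊔ ⌈|p.1|⌉₊ with hn
          have hpmem : p ∈ Bn n := by
            constructor
            · exact ⟨hp, (Nat.le_ceil _).trans (by exact_mod_cast Nat.cast_le.mpr (le_sup_left))⟩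
            · refine ⟨?_, Set.mem_univ _⟩
              have h1 : |p.1| ≤ (n:ℝ) := (Nat.le_ceil _).trans (by exact_mod_cast Nat.cast_le.mpr (le_sup_right))
              exact ⟨neg_le_of_abs_le h1, le_of_abs_le h1⟩
          exact le_iSup_of_le n (by rw [Set.indicator_of_mem hpmem])
        · exact iSup_le fun n => Set.indicator_le_self _ _ p
      · rw [ENNReal.ofReal_of_nonpos hp.le]
        symm
        refine ENNReal.iSup_eq_zero.mpr fun n => ?_
        refine Set.indicator_of_notMem (fun hmem => ?_) _
        exact absurd hmem.1.1 (not_le.mpr hp)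
    calc ∫⁻ p, ENNReal.ofReal (q' p) ∂m2
        = ∫⁻ p, ⨆ n, (Bn n).indicator (fun p => ENNReal.ofReal (q' p)) p ∂m2 :=
          lintegral_congr hcover
      _ = ⨆ n, ∫⁻ p, (Bn n).indicator (fun p => ENNReal.ofReal (q' p)) p ∂m2 := by
          apply lintegral_iSup
          · exact fun n => (ENNReal.measurable_ofReal.comp hq'm).indicator (hBnm n)
          · intro n m hnm p
            exact Set.indicator_le_indicator_of_subset (hmono hnm) (fun _ => by simp) p
      _ = ⨆ n, ∫⁻ p in Bn n, ENNReal.ofReal (q' p) ∂m2 := by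
          refine iSup_congr fun n => ?_
          exact lintegral_indicator (hBnm n) _
      _ ≤ ENNReal.ofReal Cφ' := iSup_le hBint
  have hqplus := key_fin q hqmeas habsB
  have hqminus := key_fin (fun p => -q p) hqmeas.neg
    (by intro B hB; rw [integral_neg, abs_neg]; exact habsB B hB)
  have hqint : Integrable q m2 := by
    refine ⟨hqmeas.aestronglyMeasurable, ?_⟩
    rw [hasFiniteIntegral_iff_norm]
    calc ∫⁻ p, ENNReal.ofReal ‖q p‖ ∂m2
        ≤ ∫⁻ p, (ENNReal.ofReal (q p) + ENNReal.ofReal (-q p)) ∂m2 :=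
          lintegral_mono fun p => by simpa [Real.norm_eq_abs] using ofReal_abs_le (q p)
      _ = (∫⁻ p, ENNReal.ofReal (q p) ∂m2) + ∫⁻ p, ENNReal.ofReal (-q p) ∂m2 :=
          lintegral_add_left (ENNReal.measurable_ofReal.comp hqmeas) _
      _ < ⊤ := ENNReal.add_lt_top.mpr
          ⟨hqplus.trans_lt ENNReal.ofReal_lt_top, hqminus.trans_lt ENNReal.ofReal_lt_top⟩
  -- integrability helpers for the two sides
  have intL : ∀ (a b : ℝ) (f : Set.Icc (0:ℝ) 1 → ℝ), Measurable f → ∀ C : ℝ, (∀ s, ‖f s‖ ≤ C) →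
      Integrable (fun x => (Set.Icc a b).indicator (fun _ => (1:ℝ)) (g x) * f (τ x) * φ x) μ := by
    intro a b f hf C hC
    apply hφint.bdd_mul
    · exact (((measurable_const.indicator measurableSet_Icc).comp hgm).mul
        (hf.comp hτmeas)).aestronglyMeasurable
    · refine ae_of_all _ (fun x => (?_ : ‖_‖ ≤ C))
      have hind : ‖(Set.Icc a b).indicator (fun _ => (1:ℝ)) (g x)‖ ≤ 1 := by
        by_cases hx : g x ∈ Set.Icc a b
        · simp [Set.indicator_of_mem hx]
        · simp [Set.indicator_of_notMem hx]
      calc ‖(Set.Icc a b).indicator (fun _ => (1:ℝ)) (g x) * f (τ x)‖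
          = ‖(Set.Icc a b).indicator (fun _ => (1:ℝ)) (g x)‖ * ‖f (τ x)‖ := norm_mul _ _
        _ ≤ 1 * C := mul_le_mul hind (hC _) (norm_nonneg _) zero_le_one
        _ = C := one_mul C
  have intR : ∀ (a b : ℝ) (f : Set.Icc (0:ℝ) 1 → ℝ), Measurable f → ∀ C : ℝ, (∀ s, ‖f s‖ ≤ C) →
      Integrable (fun p : ℝ × Set.Icc (0:ℝ) 1 =>
        (Set.Icc a b).indicator (fun _ => (1:ℝ)) p.1 * f p.2 * q p) m2 := by
    intro a b f hf C hC
    apply hqint.bdd_mul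
    · exact (((measurable_const.indicator measurableSet_Icc).comp measurable_fst).mul
        (hf.comp measurable_snd)).aestronglyMeasurable
    · refine ae_of_all _ (fun p => (?_ : ‖_‖ ≤ C))
      have hind : ‖(Set.Icc a b).indicator (fun _ => (1:ℝ)) p.1‖ ≤ 1 := by
        by_cases hx : p.1 ∈ Set.Icc a b
        · simp [Set.indicator_of_mem hx]
        · simp [Set.indicator_of_notMem hx]
      calc ‖(Set.Icc a b).indicator (fun _ => (1:ℝ)) p.1 * f p.2‖
          = ‖(Set.Icc a b).indicator (fun _ => (1:ℝ)) p.1‖ * ‖f p.2‖ := norm_mul _ _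
        _ ≤ 1 * C := mul_le_mul hind (hC _) (norm_nonneg _) zero_le_one
        _ = C := one_mul C
  -- the extension of hq to bounded measurable integrands
  have hB : ∀ (a b : ℝ) (f : Set.Icc (0:ℝ) 1 → ℝ), Measurable f → (∃ C, ∀ s, ‖f s‖ ≤ C) →
      ∫ x, (Set.Icc a b).indicator (fun _ => (1:ℝ)) (g x) * f (τ x) * φ x ∂μ
        = ∫ p, (Set.Icc a b).indicator (fun _ => (1:ℝ)) p.1 * f p.2 * q p ∂m2 := by
    intro a b
    have hsimple : ∀ f : SimpleFunc (Set.Icc (0:ℝ) 1) ℝ,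
        ∫ x, (Set.Icc a b).indicator (fun _ => (1:ℝ)) (g x) * f (τ x) * φ x ∂μ
          = ∫ p, (Set.Icc a b).indicator (fun _ => (1:ℝ)) p.1 * f p.2 * q p ∂m2 := by
      intro f
      apply SimpleFunc.induction (motive := fun (f : SimpleFunc (Set.Icc (0:ℝ) 1) ℝ) =>
        ∫ x, (Set.Icc a b).indicator (fun _ => (1:ℝ)) (g x) * f (τ x) * φ x ∂μ
          = ∫ p, (Set.Icc a b).indicator (fun _ => (1:ℝ)) p.1 * f p.2 * q p ∂m2)
      · intro c s hs
        have hcoe : ∀ u : Set.Icc (0:ℝ) 1,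
            (SimpleFunc.piecewise s hs (SimpleFunc.const _ c) (SimpleFunc.const _ 0)) u
              = s.indicator (fun _ => c) u := by
          intro u
          simp [SimpleFunc.piecewise_apply, Set.indicator]
        simp only [hcoe]
        have hBmeas : MeasurableSet (Set.Icc a b ×ˢ s) := measurableSet_Icc.prod hs
        have hLpt : ∀ x : E,
            (Set.Icc a b).indicator (fun _ => (1:ℝ)) (g x) * s.indicator (fun _ => c) (τ x) * φ x
              = c * ((Set.Icc a b ×ˢ s).indicator (fun _ => (1:ℝ)) (g x, τ x) * φ x) := by
          intro x
          by_cases h1 : g x ∈ Set.Icc a b <;> by_cases h2 : τ x ∈ s <;>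
            simp [Set.indicator, Set.mem_prod, h1, h2] <;> ring
        have hRpt : ∀ p : ℝ × Set.Icc (0:ℝ) 1,
            (Set.Icc a b).indicator (fun _ => (1:ℝ)) p.1 * s.indicator (fun _ => c) p.2 * q p
              = c * (Set.Icc a b ×ˢ s).indicator q p := by
          intro p
          by_cases h1 : p.1 ∈ Set.Icc a b <;> by_cases h2 : p.2 ∈ s <;>
            simp [Set.indicator, Set.mem_prod, h1, h2] <;> ring
        simp only [hLpt, hRpt]
        rw [integral_const_mul, integral_const_mul, hq _ hBmeas, ← integral_indicator hBmeas]
      · intro f f' hdisj hf hf'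
        obtain ⟨Cf, hCf⟩ := f.exists_forall_norm_le
        obtain ⟨Cf', hCf'⟩ := f'.exists_forall_norm_le
        have hLpt : ∀ x : E,
            (Set.Icc a b).indicator (fun _ => (1:ℝ)) (g x) * (f + f') (τ x) * φ x
              = (Set.Icc a b).indicator (fun _ => (1:ℝ)) (g x) * f (τ x) * φ x
                + (Set.Icc a b).indicator (fun _ => (1:ℝ)) (g x) * f' (τ x) * φ x := by
          intro x
          simp only [SimpleFunc.coe_add, Pi.add_apply]
          ring
        have hRpt : ∀ p : ℝ × Set.Icc (0:ℝ) 1,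
            (Set.Icc a b).indicator (fun _ => (1:ℝ)) p.1 * (f + f') p.2 * q p
              = (Set.Icc a b).indicator (fun _ => (1:ℝ)) p.1 * f p.2 * q p
                + (Set.Icc a b).indicator (fun _ => (1:ℝ)) p.1 * f' p.2 * q p := by
          intro p
          simp only [SimpleFunc.coe_add, Pi.add_apply]
          ring
        simp only [hLpt, hRpt]
        rw [integral_add (intL a b f f.measurable Cf hCf) (intL a b f' f'.measurable Cf' hCf'),
          integral_add (intR a b f f.measurable Cf hCf) (intR a b f' f'.measurable Cf' hCf'),
          hf, hf']
    intro f hf hfb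
    obtain ⟨C, hC⟩ := hfb
    have hC0 : 0 ≤ C := (norm_nonneg (f ⟨0, by constructor <;> norm_num⟩)).trans (hC _)
    set fn : ℕ → SimpleFunc (Set.Icc (0:ℝ) 1) ℝ :=
      fun n => SimpleFunc.approxOn f hf Set.univ 0 (Set.mem_univ 0) n with hfn
    have htend : ∀ u, Tendsto (fun n => fn n u) atTop (𝓝 (f u)) := fun u =>
      SimpleFunc.tendsto_approxOn hf _ (by simp)
    have hfnb : ∀ n u, ‖fn n u‖ ≤ C + C := fun n u =>
      (SimpleFunc.norm_approxOn_zero_le hf _ u n).trans (by have := hC u; linarith)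
    have hT1 : Tendsto
        (fun n => ∫ x, (Set.Icc a b).indicator (fun _ => (1:ℝ)) (g x) * fn n (τ x) * φ x ∂μ)
        atTop (𝓝 (∫ x, (Set.Icc a b).indicator (fun _ => (1:ℝ)) (g x) * f (τ x) * φ x ∂μ)) := by
      apply tendsto_integral_of_dominated_convergence (bound := fun x => (C + C) * |φ x|)
      · intro n
        exact (intL a b (fn n) (fn n).measurable (C + C) (hfnb n)).1
      · exact habsφint.const_mul _
      · intro n
        apply ae_of_all
        intro x
        have hind : ‖(Set.Icc a b).indicator (fun _ => (1:ℝ)) (g x)‖ ≤ 1 := by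
          by_cases hx : g x ∈ Set.Icc a b
          · simp [Set.indicator_of_mem hx]
          · simp [Set.indicator_of_notMem hx]
        calc ‖(Set.Icc a b).indicator (fun _ => (1:ℝ)) (g x) * fn n (τ x) * φ x‖
            = ‖(Set.Icc a b).indicator (fun _ => (1:ℝ)) (g x)‖ * ‖fn n (τ x)‖ * ‖φ x‖ := by
              rw [norm_mul, norm_mul]
          _ ≤ 1 * (C + C) * ‖φ x‖ := by
              gcongr
              exact hfnb n _
          _ = (C + C) * |φ x| := by rw [one_mul, Real.norm_eq_abs]
      · apply ae_of_all
        intro x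
        exact (tendsto_const_nhds.mul (htend (τ x))).mul tendsto_const_nhds
    have hT2 : Tendsto
        (fun n => ∫ p, (Set.Icc a b).indicator (fun _ => (1:ℝ)) p.1 * fn n p.2 * q p ∂m2)
        atTop (𝓝 (∫ p, (Set.Icc a b).indicator (fun _ => (1:ℝ)) p.1 * f p.2 * q p ∂m2)) := by
      apply tendsto_integral_of_dominated_convergence (bound := fun p => (C + C) * ‖q p‖)
      · intro n
        exact (intR a b (fn n) (fn n).measurable (C + C) (hfnb n)).1
      · exact hqint.norm.const_mul _
      · intro n
        apply ae_of_all
        intro p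
        have hind : ‖(Set.Icc a b).indicator (fun _ => (1:ℝ)) p.1‖ ≤ 1 := by
          by_cases hx : p.1 ∈ Set.Icc a b
          · simp [Set.indicator_of_mem hx]
          · simp [Set.indicator_of_notMem hx]
        calc ‖(Set.Icc a b).indicator (fun _ => (1:ℝ)) p.1 * fn n p.2 * q p‖
            = ‖(Set.Icc a b).indicator (fun _ => (1:ℝ)) p.1‖ * ‖fn n p.2‖ * ‖q p‖ := by
              rw [norm_mul, norm_mul]
          _ ≤ 1 * (C + C) * ‖q p‖ := by
              gcongr
              exact hfnb n _
          _ = (C + C) * ‖q p‖ := by rw [one_mul]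
      · apply ae_of_all
        intro p
        exact (tendsto_const_nhds.mul (htend p.2)).mul tendsto_const_nhds
    exact tendsto_nhds_unique (hT1.congr fun n => hsimple (fn n)) hT2
  -- Fubini step
  have hzq_int : Integrable (fun p : ℝ × Set.Icc (0:ℝ) 1 => z p.2 * q p) m2 :=
    hqint.bdd_mul (c := ‖z‖) (hzmeas.comp measurable_snd).aestronglyMeasurable
      (ae_of_all _ fun p => hzb p.2)
  have hfub : ∀ a b : ℝ,
      ∫ p, (Set.Icc a b).indicator (fun _ => (1:ℝ)) p.1 * z p.2 * q p ∂m2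
        = ∫ t in Set.Icc a b, F t := by
    intro a b
    have h1 : ∀ p : ℝ × Set.Icc (0:ℝ) 1,
        (Set.Icc a b).indicator (fun _ => (1:ℝ)) p.1 * z p.2 * q p
          = (Set.Icc a b ×ˢ (Set.univ : Set (Set.Icc (0:ℝ) 1))).indicator
              (fun p => z p.2 * q p) p := by
      intro p
      by_cases hp : p.1 ∈ Set.Icc a b
      · rw [Set.indicator_of_mem hp,
          Set.indicator_of_mem (Set.mem_prod.mpr ⟨hp, Set.mem_univ _⟩)]
        ring
      · rw [Set.indicator_of_notMem hp,
          Set.indicator_of_notMem (fun hmem => hp (Set.mem_prod.mp hmem).1)]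
        ring
    simp only [h1]
    rw [integral_indicator (measurableSet_Icc.prod MeasurableSet.univ)]
    have hres : Integrable (fun p : ℝ × Set.Icc (0:ℝ) 1 => z p.2 * q p)
        ((volume.restrict (Set.Icc a b)).prod volume) := by
      have := hzq_int.restrict (s := Set.Icc a b ×ˢ (Set.univ : Set (Set.Icc (0:ℝ) 1)))
      rwa [hm2, ← Measure.prod_restrict, Measure.restrict_univ] at this
    calc ∫ p in Set.Icc a b ×ˢ (Set.univ : Set (Set.Icc (0:ℝ) 1)), z p.2 * q p ∂m2
        = ∫ p, z p.2 * q p ∂((volume.restrict (Set.Icc a b)).prod volume) := by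
          rw [hm2, ← Measure.prod_restrict, Measure.restrict_univ]
      _ = ∫ t in Set.Icc a b, F t := integral_prod _ hres
  have hFint : Integrable F volume := hzq_int.integral_prod_left
  -- identification of the set integrals
  have hseteq : ∀ a b : ℝ, ∫ x in {x : E | a ≤ g x ∧ g x ≤ b}, z (τ x) * φ x ∂μ
      = ∫ t in Set.Icc a b, F t := by
    intro a b
    have hSeq : {x : E | a ≤ g x ∧ g x ≤ b} = g ⁻¹' (Set.Icc a b) := by
      ext x
      simp [Set.mem_Icc]
    have hS : MeasurableSet {x : E | a ≤ g x ∧ g x ≤ b} := by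
      rw [hSeq]
      exact hgm measurableSet_Icc
    rw [← integral_indicator hS]
    have hpt : ∀ x : E, ({x : E | a ≤ g x ∧ g x ≤ b}).indicator (fun x => z (τ x) * φ x) x
        = (Set.Icc a b).indicator (fun _ => (1:ℝ)) (g x) * z (τ x) * φ x := by
      intro x
      by_cases hx : a ≤ g x ∧ g x ≤ b
      · rw [Set.indicator_of_mem (show x ∈ {x : E | a ≤ g x ∧ g x ≤ b} from hx),
          Set.indicator_of_mem (Set.mem_Icc.mpr hx)]
        ring
      · rw [Set.indicator_of_notMem (show x ∉ {x : E | a ≤ g x ∧ g x ≤ b} from hx),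
          Set.indicator_of_notMem (fun h => hx (Set.mem_Icc.mp h))]
        ring
    simp only [hpt]
    rw [hB a b (fun s => z s) hzmeas ⟨‖z‖, fun s => hzb s⟩, hfub a b]
  -- integrability of hfun
  have hSr : MeasurableSet {x : E | r ≤ g x} := measurableSet_le measurable_const hgm
  have hint : Integrable hfun μ := by
    have hd1 : Continuous fun x : E => fderiv ℝ φ x z :=
      (hφ.1.continuous_fderiv one_ne_zero).clm_apply continuous_const
    obtain ⟨C2, hC2⟩ := hφ.2.2
    have hi1 : Integrable (fun x : E => fderiv ℝ φ x z) μ := by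
      apply (integrable_const (C2 * ‖z‖)).mono' hd1.aestronglyMeasurable
      apply ae_of_all
      intro x
      calc ‖fderiv ℝ φ x z‖ ≤ ‖fderiv ℝ φ x‖ * ‖z‖ := (fderiv ℝ φ x).le_opNorm z
        _ ≤ C2 * ‖z‖ := mul_le_mul_of_nonneg_right (hC2 x) (norm_nonneg z)
    have hi2 : Integrable (fun x => φ x * w x) μ :=
      hw.bdd_mul hφc.aestronglyMeasurable
        (ae_of_all _ fun x => by simpa [Real.norm_eq_abs] using hCφ x)
    have hi2' : Integrable (fun x => w x * φ x) μ := by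
      simpa [mul_comm] using hi2
    exact hi1.sub hi2'
  -- a.e. x, g x ≠ r
  have hne : ∀ᵐ x ∂μ, g x ≠ r := by
    have h1 : μ.map g {r} = 0 := habs Real.volume_singleton
    rw [Measure.map_apply hgm (measurableSet_singleton r)] at h1
    rw [ae_iff]
    simpa [Set.preimage, Set.mem_singleton_iff] using h1
  -- the sequence of epsilons
  set εs : ℕ → ℝ := fun n => (-r) / (2 * ((n:ℝ) + 1)) with hεs
  have hεpos : ∀ n, 0 < εs n := fun n => div_pos (by linarith) (by positivity)
  have hεle : ∀ n, εs n ≤ -r / 2 := by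
    intro n
    rw [hεs]
    rw [div_le_div_iff₀ (by positivity) (by norm_num)]
    nlinarith [Nat.cast_nonneg (α := ℝ) n]
  have hrε : ∀ n, r + εs n < 0 := fun n => by have := hεle n; linarith
  have hεto : Tendsto εs atTop (𝓝 0) := by
    have h1 : Tendsto (fun n : ℕ => (-r/2) * (1 / ((n:ℝ) + 1))) atTop (𝓝 ((-r/2) * 0)) :=
      tendsto_one_div_add_atTop_nhds_zero_nat.const_mul _
    rw [mul_zero] at h1
    refine h1.congr fun n => ?_
    rw [hεs]
    field_simp
  -- per-n key identity
  have heqn : ∀ n, (1 / (2 * εs n)) * ∫ t in Set.Icc (r - εs n) (r + εs n), F t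
      = - ∫ x, theta r (εs n) (g x) * hfun x ∂μ := by
    intro n
    have h := hkey φ hφ (εs n) (hεpos n) r (hrε n)
    rw [hseteq (r - εs n) (r + εs n)] at h
    exact h
  -- limit of the left-hand side
  have hA : Tendsto (fun n => (1 / (2 * εs n)) * ∫ t in Set.Icc (r - εs n) (r + εs n), F t)
      atTop (𝓝 (F r)) := by
    have hFc : ContinuousAt F r := hqc.continuousAt (Iio_mem_nhds hr)
    rw [Metric.tendsto_atTop]
    intro δ hδ
    obtain ⟨η, hη, hball⟩ := Metric.continuousAt_iff.mp hFc (δ/2) (by linarith)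
    obtain ⟨N, hN⟩ := eventually_atTop.mp (hεto.eventually_lt_const hη)
    refine ⟨N, fun n hn => ?_⟩
    have hεη : εs n < η := hN n hn
    have hepos : 0 < εs n := hεpos n
    haveI : IsFiniteMeasure (volume.restrict (Set.Icc (r - εs n) (r + εs n))) := by
      constructor
      rw [Measure.restrict_apply_univ, Real.volume_Icc]
      exact ENNReal.ofReal_lt_top
    have hvol : (volume (Set.Icc (r - εs n) (r + εs n))).toReal = 2 * εs n := by
      rw [Real.volume_Icc, ENNReal.toReal_ofReal (by linarith)]
      ring
    have hsub : ∫ t in Set.Icc (r - εs n) (r + εs n), (F t - F r)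
        = (∫ t in Set.Icc (r - εs n) (r + εs n), F t) - (2 * εs n) * F r := by
      rw [integral_sub hFint.restrict (integrable_const _), setIntegral_const, measureReal_def, hvol,
        smul_eq_mul]
    have hbound : ‖∫ t in Set.Icc (r - εs n) (r + εs n), (F t - F r)‖
        ≤ (δ/2) * (volume (Set.Icc (r - εs n) (r + εs n))).toReal := by
      apply norm_setIntegral_le_of_norm_le_const
      · rw [Real.volume_Icc]
        exact ENNReal.ofReal_lt_top
      · intro t ht
        have h1 : dist t r < η := by
          rw [Real.dist_eq]
          rw [Set.mem_Icc] at ht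
          have : |t - r| ≤ εs n := abs_le.mpr ⟨by linarith [ht.1], by linarith [ht.2]⟩
          linarith
        have := hball h1
        rw [Real.dist_eq] at this
        rw [Real.norm_eq_abs]
        linarith
    rw [hvol] at hbound
    rw [Real.dist_eq]
    have hrw : (1 / (2 * εs n)) * (∫ t in Set.Icc (r - εs n) (r + εs n), F t) - F r
        = (1 / (2 * εs n)) * ∫ t in Set.Icc (r - εs n) (r + εs n), (F t - F r) := by
      rw [hsub]
      field_simp
    rw [hrw, abs_mul, abs_of_pos (show (0:ℝ) < 1 / (2 * εs n) by positivity)]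
    rw [Real.norm_eq_abs] at hbound
    calc (1 / (2 * εs n)) * |∫ t in Set.Icc (r - εs n) (r + εs n), (F t - F r)|
        ≤ (1 / (2 * εs n)) * ((δ/2) * (2 * εs n)) := by
          exact mul_le_mul_of_nonneg_left hbound (by positivity)
      _ = δ/2 := by field_simp
      _ < δ := by linarith
  -- limit of the right-hand side
  have hBlim : Tendsto (fun n => ∫ x, theta r (εs n) (g x) * hfun x ∂μ)
      atTop (𝓝 (∫ x in {x : E | r ≤ g x}, hfun x ∂μ)) := by
    rw [← integral_indicator hSr]
    apply tendsto_integral_of_dominated_convergence (bound := fun x => ‖hfun x‖)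
    · intro n
      exact ((theta_measurable r (εs n)).comp hgm).aestronglyMeasurable.mul hint.1
    · exact hint.norm
    · intro n
      apply ae_of_all
      intro x
      rw [norm_mul]
      have h1 : ‖theta r (εs n) (g x)‖ ≤ 1 := by
        rw [Real.norm_eq_abs, abs_of_nonneg (theta_nonneg (hεpos n) _)]
        exact theta_le_one (hεpos n) _
      calc ‖theta r (εs n) (g x)‖ * ‖hfun x‖ ≤ 1 * ‖hfun x‖ :=
            mul_le_mul_of_nonneg_right h1 (norm_nonneg _)
        _ = ‖hfun x‖ := one_mul _
    · filter_upwards [hne] with x hx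
      rcases lt_or_gt_of_ne hx with hlt | hgt
      · have hind : ({x : E | r ≤ g x}).indicator hfun x = 0 :=
          Set.indicator_of_notMem (show x ∉ {x : E | r ≤ g x} by simpa using not_le.mpr hlt) _
        rw [hind]
        have hev : (fun n => theta r (εs n) (g x) * hfun x) =ᶠ[atTop] (fun _ => (0:ℝ)) := by
          filter_upwards [hεto.eventually_lt_const (show (0:ℝ) < r - g x by linarith)]
            with n hn
          rw [theta_eq_zero (by linarith), zero_mul]
        exact Tendsto.congr' hev.symm tendsto_const_nhds
      · have hind : ({x : E | r ≤ g x}).indicator hfun x = hfun x :=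
          Set.indicator_of_mem (show x ∈ {x : E | r ≤ g x} from le_of_lt hgt) _
        rw [hind]
        have hev : (fun n => theta r (εs n) (g x) * hfun x) =ᶠ[atTop] (fun _ => hfun x) := by
          filter_upwards [hεto.eventually_lt_const (show (0:ℝ) < g x - r by linarith)]
            with n hn
          rw [theta_eq_one (hεpos n) (by linarith), one_mul]
        exact Tendsto.congr' hev.symm tendsto_const_nhds
  -- conclusion
  exact tendsto_nhds_unique (hA.congr heqn) hBlim.neg
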